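/- Let $p \in (0,1)$, $\tau \ge 0$, and let $(b_j)_{j \ge 1}$ be nonnegative reals such that $\sum_{j=1}^{\infty} b_j^{p}$ converges, with value $B$. Then for every $s \in \mathbb{N}$, $\sum_{\mathfrak{u} \subseteq \{1, \ldots, s\}} \big((|\mathfrak{u}|+2)!\,(|\mathfrak{u}|+6)\big)^{p} \prod_{j \in \mathfrak{u}} \big(\tau\, b_j^{2}\big)^{p/2} \ \le\ \sum_{k=0}^{\infty} \frac{\big((k+2)!\,(k+6)\big)^{p}}{k!}\; \tau^{\frac{p}{2} k}\; B^{k}$, and in particular the left-hand side is bounded uniformly in $s$. -/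

import Mathlib

/-- Binomial-type lower bound: `(x+y)^(n+1) ≥ x^(n+1) + (n+1) y x^n` for nonnegatives. -/
lemma aux_add_pow_ge (x y : ℝ) (hx : 0 ≤ x) (hy : 0 ≤ y) :
    ∀ n : ℕ, x ^ (n + 1) + (n + 1) * y * x ^ n ≤ (x + y) ^ (n + 1) := by
  intro n
  induction n with
  | zero => simp
  | succ n ih =>
      have h1 : (x + y) ^ (n + 1 + 1) = (x + y) * (x + y) ^ (n + 1) := by ring
      have h2 : (0:ℝ) ≤ x + y := by linarith
      have h3 : (x + y) * (x ^ (n + 1) + (n + 1) * y * x ^ n) ≤ (x + y) * (x + y) ^ (n + 1) :=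
        mul_le_mul_of_nonneg_left ih h2
      have hxn : (0:ℝ) ≤ x ^ n := pow_nonneg hx n
      have hxn1 : (0:ℝ) ≤ x ^ (n + 1) := pow_nonneg hx (n + 1)
      have hkey : x ^ (n + 1 + 1) + (n + 1 + 1) * y * x ^ (n + 1)
          ≤ (x + y) * (x ^ (n + 1) + (n + 1) * y * x ^ n) := by
        have e : (x + y) * (x ^ (n + 1) + ((n:ℝ) + 1) * y * x ^ n)
            = x ^ (n + 1 + 1) + ((n:ℝ) + 1 + 1) * y * x ^ (n + 1) + ((n:ℝ) + 1) * y ^ 2 * x ^ n := by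
          ring
        have hpos : (0:ℝ) ≤ ((n:ℝ) + 1) * y ^ 2 * x ^ n := by positivity
        push_cast
        rw [e]
        linarith
      push_cast
      push_cast at hkey
      linarith [hkey.trans h3]

/-- Elementary symmetric function bound: `e_k(w) ≤ (∑ w)^k / k!` for nonnegative weights. -/
lemma aux_esymm_le (w : ℕ → ℝ) (hw : ∀ j, 0 ≤ w j) :
    ∀ (t : Finset ℕ) (k : ℕ),
      ∑ u ∈ t.powersetCard k, ∏ j ∈ u, w j
        ≤ (∑ j ∈ t, w j) ^ k / (Nat.factorial k : ℝ) := by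
  intro t
  induction t using Finset.induction_on with
  | empty =>
      intro k
      cases k with
      | zero => simp
      | succ n =>
          rw [Finset.powersetCard_eq_empty.mpr (by simp)]
          simp [zero_pow]
  | insert a s ha ih =>
      intro k
      cases k with
      | zero =>
          simp
      | succ n =>
          have hdisj : Disjoint (s.powersetCard (n + 1))
              ((s.powersetCard n).image (insert a)) := by
            rw [Finset.disjoint_left]
            intro u hu hu'
            rcases Finset.mem_image.mp hu' with ⟨v, hv, rfl⟩
            have : a ∈ s := (Finset.mem_powersetCard.mp hu).1 (Finset.mem_insert_self a v)
            exact ha this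
          rw [Finset.powersetCard_succ_insert ha, Finset.sum_union hdisj]
          have himg : ∑ u ∈ (s.powersetCard n).image (insert a), ∏ j ∈ u, w j
              = w a * ∑ u ∈ s.powersetCard n, ∏ j ∈ u, w j := by
            rw [Finset.sum_image, Finset.mul_sum]
            · refine Finset.sum_congr rfl ?_
              intro u hu
              have hau : a ∉ u := fun h =>
                ha ((Finset.mem_powersetCard.mp hu).1 h)
              rw [Finset.prod_insert hau]
            · intro u hu v hv huv
              have hau : a ∉ u := fun h => ha ((Finset.mem_powersetCard.mp hu).1 h)
              have hav : a ∉ v := fun h => ha ((Finset.mem_powersetCard.mp hv).1 h)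
              have := congrArg (fun z => Finset.erase z a) huv
              simpa [Finset.erase_insert hau, Finset.erase_insert hav] using this
          rw [himg, Finset.sum_insert ha]
          set S := ∑ j ∈ s, w j with hS
          have hSnn : 0 ≤ S := Finset.sum_nonneg fun j _ => hw j
          have h1 : ∑ u ∈ s.powersetCard (n + 1), ∏ j ∈ u, w j
              ≤ S ^ (n + 1) / (Nat.factorial (n + 1) : ℝ) := ih (n + 1)
          have h2 : ∑ u ∈ s.powersetCard n, ∏ j ∈ u, w j
              ≤ S ^ n / (Nat.factorial n : ℝ) := ih n
          have hfac : (Nat.factorial (n + 1) : ℝ) = (n + 1) * (Nat.factorial n : ℝ) := by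
            rw [Nat.factorial_succ]; push_cast; ring
          have hfacpos : (0:ℝ) < (Nat.factorial (n + 1) : ℝ) := by
            exact_mod_cast Nat.factorial_pos (n + 1)
          have hfacpos' : (0:ℝ) < (Nat.factorial n : ℝ) := by
            exact_mod_cast Nat.factorial_pos n
          have step : S ^ (n + 1) / (Nat.factorial (n + 1) : ℝ)
              + w a * (S ^ n / (Nat.factorial n : ℝ))
              ≤ (w a + S) ^ (n + 1) / (Nat.factorial (n + 1) : ℝ) := by
            rw [div_add' _ _ _ (ne_of_gt hfacpos), div_le_div_iff₀ hfacpos hfacpos]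
            have hexp : S ^ (n + 1) + w a * (S ^ n / (Nat.factorial n : ℝ))
                * (Nat.factorial (n + 1) : ℝ)
                = S ^ (n + 1) + (n + 1) * w a * S ^ n := by
              rw [hfac]; field_simp
            rw [hexp]
            have := aux_add_pow_ge S (w a) hSnn (hw a) n
            have hcomm : (w a + S) ^ (n + 1) = (S + w a) ^ (n + 1) := by ring
            rw [hcomm]
            nlinarith [this, hfacpos]
          calc ∑ u ∈ s.powersetCard (n + 1), ∏ j ∈ u, w j
                + w a * ∑ u ∈ s.powersetCard n, ∏ j ∈ u, w j
              ≤ S ^ (n + 1) / (Nat.factorial (n + 1) : ℝ)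
                + w a * (S ^ n / (Nat.factorial n : ℝ)) := by
                have := mul_le_mul_of_nonneg_left h2 (hw a)
                linarith
            _ ≤ (w a + S) ^ (n + 1) / (Nat.factorial (n + 1) : ℝ) := step

/-- Dimension-independent bound on the weighted sum `S_λ` in the MLQMC
analysis: if `∑_{j ≥ 1} b_j^p` converges with value `B`, `p ∈ (0,1)` and
`τ ≥ 0`, then for every `s`,
`∑_{u ⊆ {1,…,s}} ((|u|+2)!(|u|+6))^p ∏_{j ∈ u} (τ b_j²)^{p/2}`
is bounded by the convergent series
`∑_k ((k+2)!(k+6))^p τ^{pk/2} B^k / k!`, uniformly in `s`. -/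
theorem weight_sum_bounded_uniformly (p τ B : ℝ) (hp0 : 0 < p) (hp1 : p < 1)
    (hτ : 0 ≤ τ) (b : ℕ → ℝ) (hb : ∀ j, 1 ≤ j → 0 ≤ b j)
    (hB : HasSum (fun j : ℕ => b (j + 1) ^ p) B) (s : ℕ) :
    ∑ u ∈ (Finset.Icc 1 s).powerset,
        ((Nat.factorial (u.card + 2) * (u.card + 6) : ℕ) : ℝ) ^ p *
          ∏ j ∈ u, (τ * b j ^ 2) ^ (p / 2)
      ≤ ∑' k : ℕ,
          ((Nat.factorial (k + 2) * (k + 6) : ℕ) : ℝ) ^ p / (Nat.factorial k : ℝ) *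
            τ ^ (p / 2 * k) * B ^ k := by
  have hBnn : 0 ≤ B := by
    have := sum_le_hasSum (∅ : Finset ℕ)
      (fun i _ => Real.rpow_nonneg (hb _ (Nat.le_add_left 1 i)) p) hB
    simpa using this
  set f : ℕ → ℝ := fun k =>
    ((Nat.factorial (k + 2) * (k + 6) : ℕ) : ℝ) ^ p / (Nat.factorial k : ℝ) *
      τ ^ (p / 2 * k) * B ^ k with hf
  set C : ℝ := τ ^ (p / 2) * B with hC
  have hCnn : 0 ≤ C := mul_nonneg (Real.rpow_nonneg hτ _) hBnn
  have hτpow : ∀ k : ℕ, τ ^ (p / 2 * k) = (τ ^ (p / 2)) ^ k := by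
    intro k
    rw [Real.rpow_mul hτ, Real.rpow_natCast]
  have hfeq : ∀ k : ℕ, f k
      = ((Nat.factorial (k + 2) * (k + 6) : ℕ) : ℝ) ^ p / (Nat.factorial k : ℝ) * C ^ k := by
    intro k
    rw [hf, hC]
    simp only [hτpow k, mul_pow]
    ring
  have hfnn : ∀ k : ℕ, 0 ≤ f k := by
    intro k
    rw [hfeq k]
    exact mul_nonneg (div_nonneg (Real.rpow_nonneg (Nat.cast_nonneg _) _)
      (Nat.cast_nonneg _)) (pow_nonneg hCnn k)
  -- Summability of the right-hand series
  have hsummable : Summable f := by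
    rcases eq_or_lt_of_le hCnn with hC0 | hCpos
    · apply summable_of_ne_finset_zero (s := ({0} : Finset ℕ))
      intro k hk
      have hk0 : k ≠ 0 := by simpa using hk
      rw [hfeq k, ← hC0, zero_pow hk0, mul_zero]
    · set M : ℝ := max 1 (14 * C) with hM
      have hM1 : (1:ℝ) ≤ M := le_max_left _ _
      have hM14 : 14 * C ≤ M := le_max_right _ _
      have hMnn : (0:ℝ) ≤ M := by linarith
      set N : ℕ := ⌈M ^ ((1:ℝ) / (1 - p))⌉₊ with hN
      apply summable_of_ratio_norm_eventually_le (r := 1/2) (by norm_num)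
      rw [Filter.eventually_atTop]
      refine ⟨N, fun k hk => ?_⟩
      have h1p : (0:ℝ) < 1 - p := by linarith
      -- (k+7) ≥ M^(1/(1-p))
      have h1 : M ^ ((1:ℝ) / (1 - p)) ≤ (k:ℝ) + 7 := by
        have : M ^ ((1:ℝ) / (1 - p)) ≤ (N:ℝ) := Nat.le_ceil _
        have hkN : (N:ℝ) ≤ (k:ℝ) := by exact_mod_cast hk
        linarith
      have hk7pos : (0:ℝ) < (k:ℝ) + 7 := by positivity
      have h2 : M ≤ ((k:ℝ) + 7) ^ (1 - p) := by
        have hMrw : M = (M ^ ((1:ℝ) / (1 - p))) ^ (1 - p) := by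
          rw [← Real.rpow_mul hMnn, one_div, inv_mul_cancel₀ (ne_of_gt h1p), Real.rpow_one]
        rw [hMrw]
        exact Real.rpow_le_rpow (Real.rpow_nonneg hMnn _) h1 (le_of_lt h1p)
      have h3 : ((k:ℝ) + 7) ^ p * (14 * C) ≤ (k:ℝ) + 7 := by
        calc ((k:ℝ) + 7) ^ p * (14 * C)
            ≤ ((k:ℝ) + 7) ^ p * ((k:ℝ) + 7) ^ (1 - p) :=
              mul_le_mul_of_nonneg_left (hM14.trans h2) (Real.rpow_nonneg (le_of_lt hk7pos) _)
          _ = ((k:ℝ) + 7) ^ (p + (1 - p)) := (Real.rpow_add hk7pos _ _).symm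
          _ = (k:ℝ) + 7 := by norm_num
      have hkey : ((k:ℝ) + 7) ^ p * C ≤ ((k:ℝ) + 1) / 2 := by
        have h3' : 14 * (((k:ℝ) + 7) ^ p * C) ≤ (k:ℝ) + 7 := by
          rw [show 14 * (((k:ℝ) + 7) ^ p * C) = ((k:ℝ) + 7) ^ p * (14 * C) by ring]
          exact h3
        linarith
      -- the factorial part
      set A : ℕ → ℝ := fun m => ((Nat.factorial (m + 2) * (m + 6) : ℕ) : ℝ) ^ p with hA
      have hAnn : ∀ m, 0 ≤ A m := fun m => Real.rpow_nonneg (Nat.cast_nonneg _) _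
      have hAstep : A (k + 1) ≤ A k * ((k:ℝ) + 7) ^ p := by
        have hnat : Nat.factorial (k + 1 + 2) * (k + 1 + 6)
            ≤ Nat.factorial (k + 2) * (k + 6) * (k + 7) := by
          have : Nat.factorial (k + 3) = (k + 3) * Nat.factorial (k + 2) :=
            Nat.factorial_succ (k + 2)
          calc Nat.factorial (k + 1 + 2) * (k + 1 + 6)
              = (k + 3) * Nat.factorial (k + 2) * (k + 7) := by
                rw [show k + 1 + 2 = k + 3 from rfl, this, show k + 1 + 6 = k + 7 from rfl]
            _ ≤ (k + 6) * Nat.factorial (k + 2) * (k + 7) := by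
                exact Nat.mul_le_mul_right _ (Nat.mul_le_mul_right _ (by omega))
            _ = Nat.factorial (k + 2) * (k + 6) * (k + 7) := by ring
        have hcast : ((Nat.factorial (k + 1 + 2) * (k + 1 + 6) : ℕ) : ℝ)
            ≤ ((Nat.factorial (k + 2) * (k + 6) : ℕ) : ℝ) * ((k:ℝ) + 7) := by
          push_cast
          exact_mod_cast hnat
        calc A (k + 1)
            = ((Nat.factorial (k + 1 + 2) * (k + 1 + 6) : ℕ) : ℝ) ^ p := rfl
          _ ≤ (((Nat.factorial (k + 2) * (k + 6) : ℕ) : ℝ) * ((k:ℝ) + 7)) ^ p :=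
              Real.rpow_le_rpow (Nat.cast_nonneg _) hcast (le_of_lt hp0)
          _ = A k * ((k:ℝ) + 7) ^ p :=
              Real.mul_rpow (Nat.cast_nonneg _) (le_of_lt hk7pos)
      have hfacpos : (0:ℝ) < (Nat.factorial k : ℝ) := by
        exact_mod_cast Nat.factorial_pos k
      have hfacpos1 : (0:ℝ) < (Nat.factorial (k + 1) : ℝ) := by
        exact_mod_cast Nat.factorial_pos (k + 1)
      have hfac1 : (Nat.factorial (k + 1) : ℝ) = ((k:ℝ) + 1) * (Nat.factorial k : ℝ) := by
        rw [Nat.factorial_succ]; push_cast; ring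
      have hfk : f k = A k / (Nat.factorial k : ℝ) * C ^ k := hfeq k
      have hfk1 : f (k + 1) = A (k + 1) / (Nat.factorial (k + 1) : ℝ) * C ^ (k + 1) :=
        hfeq (k + 1)
      rw [Real.norm_of_nonneg (hfnn (k + 1)), Real.norm_of_nonneg (hfnn k), hfk, hfk1]
      have hCk : (0:ℝ) ≤ C ^ k := pow_nonneg hCnn k
      rw [hfac1, div_mul_eq_mul_div, div_le_iff₀ (by positivity)]
      have hchain : A (k + 1) * C ^ (k + 1) ≤ A k * (((k:ℝ) + 1) / 2) * C ^ k := by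
        calc A (k + 1) * C ^ (k + 1)
            = A (k + 1) * C * C ^ k := by ring
          _ ≤ A k * ((k:ℝ) + 7) ^ p * C * C ^ k := by
              have := mul_le_mul_of_nonneg_right hAstep (le_of_lt hCpos)
              exact mul_le_mul_of_nonneg_right this hCk
          _ = A k * (((k:ℝ) + 7) ^ p * C) * C ^ k := by ring
          _ ≤ A k * (((k:ℝ) + 1) / 2) * C ^ k := by
              refine mul_le_mul_of_nonneg_right ?_ hCk
              exact mul_le_mul_of_nonneg_left hkey (hAnn k)
        
      calc A (k + 1) * C ^ (k + 1)
          ≤ A k * (((k:ℝ) + 1) / 2) * C ^ k := hchain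
        _ = 1 / 2 * (A k / (Nat.factorial k : ℝ) * C ^ k) * (((k:ℝ) + 1) * (Nat.factorial k : ℝ)) := by
            field_simp
  -- Now the finite sum bound
  set w : ℕ → ℝ := fun j => (τ * b j ^ 2) ^ (p / 2) with hw
  have hwnn : ∀ j, 0 ≤ w j :=
    fun j => Real.rpow_nonneg (mul_nonneg hτ (sq_nonneg _)) _
  have hwsum : ∑ j ∈ Finset.Icc 1 s, w j ≤ τ ^ (p / 2) * B := by
    have h1 : ∀ j ∈ Finset.Icc 1 s, w j = τ ^ (p / 2) * b j ^ p := by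
      intro j hj
      have hj1 : 1 ≤ j := (Finset.mem_Icc.mp hj).1
      simp only [hw]
      rw [Real.mul_rpow hτ (sq_nonneg _), ← Real.rpow_natCast (b j) 2,
        ← Real.rpow_mul (hb j hj1)]
      congr 1
      push_cast
      ring
    rw [Finset.sum_congr rfl h1, ← Finset.mul_sum]
    refine mul_le_mul_of_nonneg_left ?_ (Real.rpow_nonneg hτ _)
    have hre : ∑ j ∈ Finset.Icc 1 s, b j ^ p = ∑ j ∈ Finset.range s, b (j + 1) ^ p := by
      rw [show Finset.Icc 1 s = Finset.Ico 1 (s + 1) from (Finset.Ico_add_one_right_eq_Icc 1 s),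
        Finset.sum_Ico_eq_sum_range]
      simp [add_comm]
    rw [hre]
    exact sum_le_hasSum _ (fun i _ => Real.rpow_nonneg (hb _ (Nat.le_add_left 1 i)) p) hB
  have hWnn : 0 ≤ ∑ j ∈ Finset.Icc 1 s, w j := Finset.sum_nonneg fun j _ => hwnn j
  rw [Finset.powerset_card_disjiUnion]; erw [Finset.sum_disjiUnion]
  refine le_trans ?_
    (Summable.sum_le_tsum (Finset.range ((Finset.Icc 1 s).card + 1)) (fun k _ => hfnn k) hsummable)
  apply Finset.sum_le_sum
  intro k _
  have hcongr : ∀ u ∈ (Finset.Icc 1 s).powersetCard k,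
      ((Nat.factorial (u.card + 2) * (u.card + 6) : ℕ) : ℝ) ^ p * ∏ j ∈ u, w j
      = ((Nat.factorial (k + 2) * (k + 6) : ℕ) : ℝ) ^ p * ∏ j ∈ u, w j := by
    intro u hu
    rw [(Finset.mem_powersetCard.mp hu).2]
  rw [Finset.sum_congr rfl hcongr, ← Finset.mul_sum, hτpow k]
  have hAk : (0:ℝ) ≤ ((Nat.factorial (k + 2) * (k + 6) : ℕ) : ℝ) ^ p :=
    Real.rpow_nonneg (Nat.cast_nonneg _) _
  calc ((Nat.factorial (k + 2) * (k + 6) : ℕ) : ℝ) ^ p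
        * ∑ u ∈ (Finset.Icc 1 s).powersetCard k, ∏ j ∈ u, w j
      ≤ ((Nat.factorial (k + 2) * (k + 6) : ℕ) : ℝ) ^ p
        * ((∑ j ∈ Finset.Icc 1 s, w j) ^ k / (Nat.factorial k : ℝ)) :=
        mul_le_mul_of_nonneg_left (aux_esymm_le w hwnn (Finset.Icc 1 s) k) hAk
    _ ≤ ((Nat.factorial (k + 2) * (k + 6) : ℕ) : ℝ) ^ p
        * ((τ ^ (p / 2) * B) ^ k / (Nat.factorial k : ℝ)) := by
        refine mul_le_mul_of_nonneg_left ?_ hAk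
        have hpow : (∑ j ∈ Finset.Icc 1 s, w j) ^ k ≤ (τ ^ (p / 2) * B) ^ k :=
          pow_le_pow_left₀ hWnn hwsum k
        exact div_le_div_of_nonneg_right hpow (Nat.cast_nonneg _)
    _ = ((Nat.factorial (k + 2) * (k + 6) : ℕ) : ℝ) ^ p / (Nat.factorial k : ℝ)
        * (τ ^ (p / 2)) ^ k * B ^ k := by
        rw [mul_pow]
        ring
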